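/- Let C be a completed PDAG and let x, y be two nonadjacent vertices with equal parent sets Π_x = Π_y such that every undirected path from x to y contains a vertex in N_{xy} = N_x ∩ N_y. Let P' be the mixed graph obtained from C by adding the undirected edge x − y. Then P' is a chain graph, every chain component of P' is chordal, and P' contains no induced subgraph of the form w → u − v with w, v nonadjacent. -/

import Mathlib

structure MixedGraph (V : Type*) where
  dir : V → V → Prop
  undir : V → V → Prop
  undir_symm : ∀ x y, undir x y → undir y x
  dir_irrefl : ∀ x, ¬ dir x x
  undir_irrefl : ∀ x, ¬ undir x x
  dir_asymm : ∀ x y, dir x y → ¬ dir y x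
  not_both : ∀ x y, dir x y → ¬ undir x y

namespace MixedGraph

variable {V : Type*} (G : MixedGraph V)

/-- `a` and `b` are joined by some edge, oriented from `a` to `b` if directed. -/
def edge (a b : V) : Prop := G.dir a b ∨ G.undir a b

/-- `a` and `b` are adjacent (joined by a directed or undirected edge). -/
def adj (a b : V) : Prop := G.dir a b ∨ G.dir b a ∨ G.undir a b

/-- The consecutive (cyclic) pairs of the cycle `v :: l`. -/
def cyclePairs (v : V) (l : List V) : List (V × V) := (v :: l).zip (l ++ [v])

/-- `v :: l` is a partially directed cycle: at least two distinct vertices, every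
cyclically consecutive pair joined by an edge (directed forward or undirected),
and at least one such edge directed. -/
def IsPDCycle (v : V) (l : List V) : Prop :=
  l ≠ [] ∧ (v :: l).Nodup ∧
  (∀ p ∈ cyclePairs v l, G.edge p.1 p.2) ∧
  (∃ p ∈ cyclePairs v l, G.dir p.1 p.2)

/-- A chain graph contains no partially directed cycle. -/
def IsChainGraph : Prop := ∀ (v : V) (l : List V), ¬ G.IsPDCycle v l

/-- `v :: l` is an undirected cycle of length at least 4. -/
def IsUCycle (v : V) (l : List V) : Prop :=
  4 ≤ (v :: l).length ∧ (v :: l).Nodup ∧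
  (∀ p ∈ cyclePairs v l, G.undir p.1 p.2)

/-- The cycle `v :: l` has a chord: an undirected edge between two vertices of the
cycle that is not one of the cycle's edges. -/
def HasChord (v : V) (l : List V) : Prop :=
  ∃ a b, a ∈ v :: l ∧ b ∈ v :: l ∧ G.undir a b ∧
    (a, b) ∉ cyclePairs v l ∧ (b, a) ∉ cyclePairs v l

/-- Every undirected cycle of length at least 4 has a chord; equivalently every
chain component induces a chordal undirected graph. -/
def IsChordalUndir : Prop := ∀ v l, G.IsUCycle v l → G.HasChord v l

/-- No induced subgraph `w → u − v` with `w, v` nonadjacent. -/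
def NoFlag : Prop := ∀ w u v, G.dir w u → G.undir u v → G.adj w v

/-- The directed edge `v → u` is strongly protected: it occurs in one of the four
protecting configurations. -/
def StronglyProtected (v u : V) : Prop :=
  (∃ w, G.dir w v ∧ ¬ G.adj w u) ∨
  (∃ w, G.dir w u ∧ w ≠ v ∧ ¬ G.adj v w) ∨
  (∃ w, G.dir v w ∧ G.dir w u) ∨
  (∃ w w₁, w ≠ w₁ ∧ G.undir v w ∧ G.undir v w₁ ∧ G.dir w u ∧ G.dir w₁ u ∧
    ¬ G.adj w w₁)

/-- Andersson's characterization: a completed PDAG (essential graph) is a chain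
graph with chordal chain components, no induced flag `w → u − v`, and all
directed edges strongly protected. -/
def IsCompletedPDAG : Prop :=
  G.IsChainGraph ∧ G.IsChordalUndir ∧ G.NoFlag ∧
  ∀ v u, G.dir v u → G.StronglyProtected v u

/-- The neighbour set of `v`: vertices joined to `v` by an undirected edge. -/
def nbhd (v : V) : Set V := {u | G.undir v u}

/-- The parent set of `v`: vertices with a directed edge into `v`. -/
def parents (v : V) : Set V := {u | G.dir u v}

end MixedGraph

/-- An undirected path from `x` to `y`: a list of distinct vertices starting at
`x`, ending at `y`, with consecutive vertices joined by undirected edges. -/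
def IsUPath {V : Type*} (G : MixedGraph V) (l : List V) (x y : V) : Prop :=
  l.head? = some x ∧ l.getLast? = some y ∧ l.Nodup ∧ l.Chain' G.undir
namespace MGAux

open List MixedGraph

variable {V : Type*} {G : MixedGraph V}

/-- some consecutive pair of `l` is a directed edge. -/
def HasDirPair (G : MixedGraph V) (l : List V) : Prop :=
  ∃ k, ∃ h : k + 1 < l.length, G.dir l[k] l[k+1]

lemma adj_symm {a b : V} (h : G.adj a b) : G.adj b a := by
  rcases h with h | h | h
  · exact Or.inr (Or.inl h)
  · exact Or.inl h
  · exact Or.inr (Or.inr (G.undir_symm _ _ h))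

lemma cyclePairs_triple (a b c : V) :
    cyclePairs a [b, c] = [(a, b), (b, c), (c, a)] := by
  simp [MixedGraph.cyclePairs]

/-- Lemma A : in a chain graph with no flags, `a → b − c` forces `a → c`. -/
lemma lemA (hC : G.IsChainGraph) (hF : G.NoFlag) {a b c : V}
    (hab : G.dir a b) (hbc : G.undir b c) : G.dir a c := by
  have hne_ab : a ≠ b := fun h => G.dir_irrefl a (h ▸ hab)
  have hne_bc : b ≠ c := fun h => G.undir_irrefl b (h ▸ hbc)
  have hne_ac : a ≠ c := by
    rintro rfl
    exact G.not_both a b hab (G.undir_symm _ _ hbc)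
  rcases hF a b c hab hbc with h | h | h
  · exact h
  · exfalso
    refine hC a [b, c] ⟨by simp, by simp [hne_ab, hne_bc, hne_ac], ?_,
      ⟨(a, b), by rw [cyclePairs_triple]; simp, hab⟩⟩
    rw [cyclePairs_triple]
    rintro p hp
    simp only [List.mem_cons, List.not_mem_nil, or_false] at hp
    rcases hp with rfl | rfl | rfl
    · exact Or.inl hab
    · exact Or.inr hbc
    · exact Or.inl h
  · exfalso
    refine hC a [b, c] ⟨by simp, by simp [hne_ab, hne_bc, hne_ac], ?_,
      ⟨(a, b), by rw [cyclePairs_triple]; simp, hab⟩⟩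
    rw [cyclePairs_triple]
    rintro p hp
    simp only [List.mem_cons, List.not_mem_nil, or_false] at hp
    rcases hp with rfl | rfl | rfl
    · exact Or.inl hab
    · exact Or.inr hbc
    · exact Or.inr (G.undir_symm _ _ h)

/-- Lemma A iterated along an undirected path. -/
lemma lemA2 (hC : G.IsChainGraph) (hF : G.NoFlag) {a : V} :
    ∀ (m : List V) (b c : V), G.dir a b → List.Chain' G.undir (b :: m) →
      (b :: m).getLast? = some c → G.dir a c := by
  intro m
  induction m with
  | nil => intro b c hab _ hlast; simp at hlast; exact hlast ▸ hab
  | cons d m ih =>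
    intro b c hab hch hlast
    rw [List.Chain', List.isChain_cons_cons] at hch
    exact ih d c (lemA hC hF hab hch.1) hch.2 (by simpa using hlast)

end MGAux
namespace MGAux
open List MixedGraph
variable {V : Type*} {G : MixedGraph V}

lemma getLast?_getElem {l : List V} {p : V} (h : l.getLast? = some p) :
    ∃ h0 : 0 < l.length, l[l.length - 1]'(by omega) = p := by
  cases l with
  | nil => simp at h
  | cons a t =>
    refine ⟨by simp, ?_⟩
    rw [List.getLast?_eq_getElem?,
      List.getElem?_eq_getElem (show (a :: t).length - 1 < (a :: t).length by simp)] at h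
    exact Option.some_injective _ h

lemma getElem_getLast? {l : List V} (h0 : 0 < l.length) :
    l.getLast? = some (l[l.length - 1]'(by omega)) := by
  rw [List.getLast?_eq_getElem?, List.getElem?_eq_getElem (show l.length - 1 < l.length by omega)]

lemma getElem_head? {l : List V} (h0 : 0 < l.length) :
    l.head? = some (l[0]'h0) := by
  cases l with
  | nil => simp at h0
  | cons a t => rfl

/-- Normalization: a walk from `a` to `b` with a directed edge yields a walk from
`a` to some `w` with `w → b`. -/
lemma lemN (hC : G.IsChainGraph) (hF : G.NoFlag) :
    ∀ (l : List V) (a b : V), List.Chain' G.edge (a :: l) →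
      (a :: l).getLast? = some b → HasDirPair G (a :: l) →
      ∃ w m, G.dir w b ∧ List.Chain' G.edge (a :: m) ∧ (a :: m).getLast? = some w := by
  intro l
  induction l with
  | nil =>
    intro a b _ _ hd
    rcases hd with ⟨k, h, _⟩
    simp at h
  | cons a' t ih =>
    intro a b hch hlast hd
    rw [List.Chain', List.isChain_cons_cons] at hch
    by_cases hdt : HasDirPair G (a' :: t)
    · obtain ⟨w, m, hwb, hchm, hlm⟩ := ih a' b hch.2 (by simpa using hlast) hdt
      exact ⟨w, a' :: m, hwb, List.isChain_cons_cons.2 ⟨hch.1, hchm⟩, by simpa using hlm⟩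
    · have hund : List.Chain' G.undir (a' :: t) := by
        rw [List.isChain_iff_getElem] at hch; rw [List.Chain', List.isChain_iff_getElem]
        · intro i hi
          rcases hch.2 i hi with h | h
          · exact absurd ⟨i, by simp at hi ⊢; omega, h⟩ hdt
          · exact h
      have hfirst : G.dir a a' := by
        rcases hd with ⟨k, hk, hdk⟩
        match k with
        | 0 => exact hdk
        | Nat.succ k' =>
          exact absurd ⟨k', by simp at hk ⊢; omega, hdk⟩ hdt
      exact ⟨a, [], lemA2 hC hF t a' b hfirst hund (by simpa using hlast),
        List.isChain_singleton a, rfl⟩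

lemma dup_split {l : List V} {b : V} (h : l.Duplicate b) :
    ∃ l₁ l₂ l₃, l = l₁ ++ b :: l₂ ++ b :: l₃ := by
  induction h with
  | cons_mem hm =>
    obtain ⟨s, t, rfl⟩ := List.append_of_mem hm
    exact ⟨[], s, t, rfl⟩
  | cons_duplicate _ ih =>
    obtain ⟨l₁, l₂, l₃, rfl⟩ := ih
    exact ⟨_ :: l₁, l₂, l₃, rfl⟩

lemma getElem_concat {l : List V} {v : V} {k : ℕ} (h : k < l.length + 1) :
    (l ++ [v])[k]'(by simp; omega) =
      (v :: l)[(k+1) % (l.length + 1)]'(by simp; exact Nat.le_of_lt_succ (Nat.mod_lt _ (by omega))) := by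
  rcases Nat.lt_or_ge k l.length with h1 | h1
  · rw [List.getElem_append_left h1]
    have h2 : (k+1) % (l.length + 1) = k + 1 := Nat.mod_eq_of_lt (by omega)
    simp [h2]
  · have hk : k = l.length := by omega
    subst hk
    simp

lemma mem_cyclePairs {v : V} {l : List V} {p : V × V} :
    p ∈ cyclePairs v l ↔ ∃ k, ∃ h : k < l.length + 1,
      p = ((v :: l)[k]'(by simp; omega),
           (v :: l)[(k+1) % (l.length + 1)]'(by simp; exact Nat.le_of_lt_succ (Nat.mod_lt _ (by omega)))) := by
  unfold cyclePairs
  rw [List.mem_iff_getElem]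
  constructor
  · rintro ⟨k, hk, hp⟩
    have hk' : k < l.length + 1 := by simp at hk; omega
    refine ⟨k, hk', ?_⟩
    rw [← hp, List.getElem_zip]
    exact Prod.ext rfl (getElem_concat hk')
  · rintro ⟨k, hk, rfl⟩
    refine ⟨k, by simp; omega, ?_⟩
    rw [List.getElem_zip]
    exact Prod.ext rfl (getElem_concat hk)

/-- Extraction: a closed walk (walk from `q` to `p` plus a directed edge `p → q`)
contains a partially directed cycle. -/
lemma ext_cycle :
    ∀ (n : ℕ) (l : List V) (p q : V), l.length ≤ n → List.Chain' G.edge l →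
      l.head? = some q → l.getLast? = some p → G.dir p q →
      ∃ v m, G.IsPDCycle v m := by
  intro n
  induction n with
  | zero =>
    intro l p q hn _ hh _ _
    match l with
    | [] => simp at hh
    | _ :: _ => simp at hn
  | succ n ih =>
    intro l p q hn hch hh hlast hpq
    by_cases hnd : l.Nodup
    · cases l with
      | nil => simp at hh
      | cons a t =>
        obtain rfl : q = a := by simpa using hh.symm
        cases t with
        | nil =>
          have : p = q := by have h2 := hlast; simp at h2; exact h2.symm
          exact absurd (this ▸ hpq) (G.dir_irrefl q)
        | cons c t' =>
          obtain ⟨h0, hpl⟩ := getLast?_getElem hlast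
          refine ⟨q, c :: t', by simp, hnd, ?_, ?_⟩
          · intro pr hpr
            rw [mem_cyclePairs] at hpr
            obtain ⟨k, hk, rfl⟩ := hpr
            rcases Nat.lt_or_ge (k + 1) ((c :: t').length + 1) with h1 | h1
            · have hmod : (k+1) % ((c :: t').length + 1) = k + 1 := Nat.mod_eq_of_lt h1
              rw [List.Chain', List.isChain_iff_getElem] at hch
              have := hch k (by simp at h1 ⊢; omega)
              simp only [hmod]
              simpa [List.get_eq_getElem] using this
            · have hk1 : k = (c :: t').length := by omega
              subst hk1
              simp only [Nat.mod_self, List.getElem_cons_zero]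
              have : (q :: c :: t')[(c :: t').length]'(by simp) = p := by
                simpa using hpl
              rw [this]
              exact Or.inl hpq
          · refine ⟨(p, q), ?_, hpq⟩
            rw [mem_cyclePairs]
            refine ⟨(c :: t').length, by omega, ?_⟩
            simp only [Nat.mod_self, List.getElem_cons_zero]
            have : (q :: c :: t')[(c :: t').length]'(by simp) = p := by
              simpa using hpl
            rw [this]
    · obtain ⟨b, hb⟩ := List.exists_duplicate_iff_not_nodup.2 hnd
      obtain ⟨l₁, l₂, l₃, rfl⟩ := dup_split hb
      have hassoc : l₁ ++ b :: l₂ ++ b :: l₃ = l₁ ++ ((b :: l₂) ++ (b :: l₃)) := by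
        simp
      rw [hassoc] at hch hh hlast hn
      rw [List.Chain', List.isChain_append] at hch
      obtain ⟨hch₁, hch₂, hglue⟩ := hch
      rw [List.isChain_append] at hch₂
      obtain ⟨_, hch₃, _⟩ := hch₂
      refine ih (l₁ ++ b :: l₃) p q ?_ ?_ ?_ ?_ hpq
      · simp at hn ⊢; omega
      · rw [List.Chain', List.isChain_append]
        exact ⟨hch₁, hch₃, by simpa using hglue⟩
      · cases l₁ with
        | nil => simpa using hh
        | cons c l₁ => simpa using hh
      · rw [List.getLast?_append_cons]
        rw [List.getLast?_append_of_ne_nil _ (show ((b :: l₂) ++ (b :: l₃)) ≠ [] by simp),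
          List.getLast?_append_cons] at hlast
        exact hlast

end MGAux
namespace MGAux
open List MixedGraph
variable {V : Type*} {G : MixedGraph V}

lemma mod_two_cases {a b n : ℕ} (hb : b < n) (ha : a < 2 * n) :
    a % n = b ↔ (a = b ∨ a = b + n) := by
  rcases Nat.lt_or_ge a n with h | h
  · rw [Nat.mod_eq_of_lt h]; omega
  · rw [Nat.mod_eq_sub_mod h, Nat.mod_eq_of_lt (by omega)]; omega

lemma glued_getElem {v : V} {l : List V} {i m : ℕ} (hm : m < l.length + 1) :
    ((l ++ [v]).rotate i)[m]'(by simp; omega) =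
      (v :: l)[(i + 1 + m) % (l.length + 1)]'
        (by simp; exact Nat.le_of_lt_succ (Nat.mod_lt _ (by omega))) := by
  rw [List.getElem_rotate]
  have h1 : (m + i) % (l ++ [v]).length < l.length + 1 := by
    simp; exact Nat.le_of_lt_succ (Nat.mod_lt _ (by omega))
  rw [getElem_concat (by simpa using h1)]
  have h2 : ((m + i) % ((l ++ [v]).length) + 1) % (l.length + 1)
      = (i + 1 + m) % (l.length + 1) := by
    simp only [List.length_append, List.length_singleton]
    rw [Nat.mod_add_mod]
    congr 1
    omega
  simp only [h2]

lemma glued_chain' {v : V} {l : List V} {i : ℕ} {R : V → V → Prop}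
    (hi : i < l.length + 1)
    (hset : ∀ k, (hk : k < l.length + 1) → k ≠ i →
      R ((v :: l)[k]'(by simp; omega))
        ((v :: l)[(k+1) % (l.length + 1)]'(by simp; exact Nat.le_of_lt_succ (Nat.mod_lt _ (by omega))))) :
    List.Chain' R ((l ++ [v]).rotate i) := by
  rw [List.Chain', List.isChain_iff_getElem]
  intro m hm
  have hm' : m < l.length + 1 := by simp at hm; omega
  have hm1 : m + 1 < l.length + 1 := by simp at hm; omega
  have e1 := glued_getElem (v := v) (l := l) (i := i) hm'
  have e2 := glued_getElem (v := v) (l := l) (i := i) hm1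
  simp only [e1, e2]
  have hk : (i + 1 + m) % (l.length + 1) < l.length + 1 := Nat.mod_lt _ (by omega)
  have hkne : (i + 1 + m) % (l.length + 1) ≠ i := by
    intro hcontra
    rw [mod_two_cases hi (by omega)] at hcontra
    omega
  have hsucc : ((i + 1 + m) % (l.length + 1) + 1) % (l.length + 1)
      = (i + 1 + (m + 1)) % (l.length + 1) := by
    rw [Nat.mod_add_mod]
    have h9 : i + 1 + m + 1 = i + 1 + (m + 1) := by omega
    rw [h9]
  have h := hset ((i + 1 + m) % (l.length + 1)) hk hkne
  simp only [hsucc] at h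
  exact h

lemma glued_head {v : V} {l : List V} {i : ℕ} (hi : i < l.length + 1) :
    ((l ++ [v]).rotate i).head? =
      some ((v :: l)[(i + 1) % (l.length + 1)]'
        (by simp; exact Nat.le_of_lt_succ (Nat.mod_lt _ (by omega)))) := by
  rw [getElem_head? (by simp : 0 < ((l ++ [v]).rotate i).length)]
  have e := glued_getElem (v := v) (l := l) (i := i) (m := 0) (by omega)
  simp only [Nat.add_zero] at e
  simp only [e]

lemma glued_last {v : V} {l : List V} {i : ℕ} (hi : i < l.length + 1) :
    ((l ++ [v]).rotate i).getLast? = some ((v :: l)[i]'(by simp; omega)) := by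
  rw [List.getLast?_eq_getElem?]
  have hlen : ((l ++ [v]).rotate i).length - 1 = l.length := by simp
  rw [List.getElem?_eq_getElem (by simp :
    ((l ++ [v]).rotate i).length - 1 < ((l ++ [v]).rotate i).length)]
  have e := glued_getElem (v := v) (l := l) (i := i) (m := l.length) (by omega)
  have hmod : (i + 1 + l.length) % (l.length + 1) = i := by
    rw [mod_two_cases (by omega : i < l.length + 1) (by omega)]
    omega
  simp only [hmod] at e
  have hlen2 : ((l ++ [v]).rotate i).length - 1 = l.length := by simp
  simp only [hlen2, e]

lemma glued_hasDirPair {v : V} {l : List V} {i j : ℕ}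
    (hi : i < l.length + 1) (hj : j < l.length + 1) (hne : j ≠ i)
    (hd : G.dir ((v :: l)[j]'(by simp; omega))
      ((v :: l)[(j+1) % (l.length + 1)]'(by simp; exact Nat.le_of_lt_succ (Nat.mod_lt _ (by omega))))) :
    HasDirPair G ((l ++ [v]).rotate i) := by
  have hkey : (i + 1 + ((j + (l.length + 1) - (i + 1)) % (l.length + 1))) % (l.length + 1)
      = j := by
    rw [Nat.add_mod_mod]
    have h4 : i + 1 + (j + (l.length + 1) - (i + 1)) = j + (l.length + 1) := by omega
    rw [h4, Nat.add_mod_right, Nat.mod_eq_of_lt hj]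
  have hmlt : (j + (l.length + 1) - (i + 1)) % (l.length + 1) < l.length + 1 :=
    Nat.mod_lt _ (by omega)
  have hmne : (j + (l.length + 1) - (i + 1)) % (l.length + 1) ≠ l.length := by
    intro h
    rw [h] at hkey
    have h5 : i + 1 + l.length = i + (l.length + 1) := by omega
    rw [h5, Nat.add_mod_right, Nat.mod_eq_of_lt (by omega)] at hkey
    exact hne hkey.symm
  refine ⟨(j + (l.length + 1) - (i + 1)) % (l.length + 1), by simp; omega, ?_⟩
  have e1 := glued_getElem (v := v) (l := l) (i := i)
    (m := (j + (l.length + 1) - (i + 1)) % (l.length + 1)) (by omega)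
  have e2 := glued_getElem (v := v) (l := l) (i := i)
    (m := (j + (l.length + 1) - (i + 1)) % (l.length + 1) + 1) (by omega)
  have hkey2 : (i + 1 + ((j + (l.length + 1) - (i + 1)) % (l.length + 1) + 1))
      % (l.length + 1) = (j + 1) % (l.length + 1) := by
    have h6 : i + 1 + ((j + (l.length + 1) - (i + 1)) % (l.length + 1) + 1)
        = (i + 1 + ((j + (l.length + 1) - (i + 1)) % (l.length + 1))) + 1 := by omega
    rw [h6, ← Nat.mod_add_mod, hkey]
  simp only [e1, e2, hkey, hkey2]
  exact hd

lemma glued_nodup {v : V} {l : List V} {i : ℕ} (h : (v :: l).Nodup) :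
    ((l ++ [v]).rotate i).Nodup := by
  rw [List.nodup_rotate, List.nodup_append]
  simp at h ⊢
  exact ⟨h.2, fun a ha hav => h.1 (hav ▸ ha)⟩

lemma glued_mem {v : V} {l : List V} {i : ℕ} {z : V}
    (h : z ∈ (l ++ [v]).rotate i) : z ∈ v :: l := by
  rw [List.mem_rotate] at h
  simp at h ⊢
  tauto

end MGAux
namespace MGAux
open List MixedGraph
variable {V : Type*} {G : MixedGraph V}

lemma noPDCycle_aux (hC : G.IsChainGraph) (hF : G.NoFlag) {x y : V}
    (hnonadj : ¬ G.adj x y) (hpar : ∀ w, G.dir w x ↔ G.dir w y)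
    (G' : MixedGraph V)
    (hdir : ∀ a b, G'.dir a b ↔ G.dir a b)
    (hundir : ∀ a b, G'.undir a b ↔
      (G.undir a b ∨ (a = x ∧ b = y) ∨ (a = y ∧ b = x)))
    {v : V} {l : List V} (hcyc : G'.IsPDCycle v l)
    {i : ℕ} (hi : i < l.length + 1)
    (hix : (v :: l)[i]'(by simp; omega) = x)
    (hiy : (v :: l)[(i+1) % (l.length+1)]'
      (by simp; exact Nat.le_of_lt_succ (Nat.mod_lt _ (by omega))) = y) :
    False := by
  obtain ⟨hl0, hnd, hall, pr, hpr, hprdir⟩ := hcyc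
  rw [hdir] at hprdir
  obtain ⟨j, hj, hpreq⟩ := mem_cyclePairs.1 hpr
  rw [hpreq] at hprdir
  simp only at hprdir
  have hlen1 : 1 ≤ l.length := by
    cases l with
    | nil => exact absurd rfl hl0
    | cons a t => simp
  rcases Nat.lt_or_ge l.length 2 with hsmall | hbig
  · -- two-cycle : both pairs join x and y, contradiction with nonadjacency
    have hll : l.length = 1 := by omega
    apply hnonadj
    have hi' : i = 0 ∨ i = 1 := by omega
    have hj' : j = 0 ∨ j = 1 := by omega
    rcases hi' with rfl | rfl <;> rcases hj' with rfl | rfl <;>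
      simp only [hll, Nat.reduceMod, Nat.reduceAdd] at hix hiy hprdir <;>
      [exact Or.inl (hix ▸ hiy ▸ hprdir);
       exact Or.inr (Or.inl (hix ▸ hiy ▸ hprdir));
       exact Or.inr (Or.inl (hix ▸ hiy ▸ hprdir));
       exact Or.inl (hix ▸ hiy ▸ hprdir)]
  · -- length at least 3
    have hji : j ≠ i := by
      rintro rfl
      exact hnonadj (Or.inl (hix ▸ hiy ▸ hprdir))
    have hset : ∀ k, (hk : k < l.length + 1) → k ≠ i →
        G.edge ((v :: l)[k]'(by simp; omega))
          ((v :: l)[(k+1) % (l.length + 1)]'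
            (by simp; exact Nat.le_of_lt_succ (Nat.mod_lt _ (by omega)))) := by
      intro k hk hkne
      have hmem := hall _ (mem_cyclePairs.2 ⟨k, hk, rfl⟩)
      simp only at hmem
      rcases hmem with hd | hu
      · exact Or.inl ((hdir _ _).1 hd)
      · rcases (hundir _ _).1 hu with hu' | ⟨hkx, hky⟩ | ⟨hky, hkx⟩
        · exact Or.inr hu'
        · exact absurd (hnd.getElem_inj_iff.1 (hix ▸ hkx)) hkne
        · exfalso
          have h1 : k = (i+1) % (l.length + 1) :=
            hnd.getElem_inj_iff.1 (hiy ▸ hky)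
          have h2 : (k+1) % (l.length + 1) = i :=
            hnd.getElem_inj_iff.1 (hix ▸ hkx)
          rw [h1, Nat.mod_add_mod] at h2
          rw [mod_two_cases (by omega) (by omega)] at h2
          omega
    have hchain := glued_chain' (v := v) (R := G.edge) hi hset
    have hhead := glued_head (v := v) (l := l) (i := i) hi
    have hlast := glued_last (v := v) (l := l) (i := i) hi
    rw [hiy] at hhead
    rw [hix] at hlast
    have hhdp := glued_hasDirPair (G := G) (v := v) hi hj hji hprdir
    obtain ⟨t, hglue⟩ : ∃ t, (l ++ [v]).rotate i = y :: t := by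
      cases hg : (l ++ [v]).rotate i with
      | nil => rw [hg] at hhead; simp at hhead
      | cons a t =>
        rw [hg] at hhead
        simp at hhead
        exact ⟨t, by rw [hhead]⟩
    rw [hglue] at hchain hlast hhdp
    obtain ⟨w, m, hwx, hchm, hlm⟩ := lemN hC hF t y x hchain hlast hhdp
    have hwy : G.dir w y := (hpar w).1 hwx
    obtain ⟨v', m', hcyc'⟩ := ext_cycle (y :: m).length (y :: m) w y le_rfl hchm
      rfl hlm hwy
    exact hC v' m' hcyc'

end MGAux
namespace MGAux
open List MixedGraph
variable {V : Type*} {G : MixedGraph V}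

lemma mod_succ_inj {k i n : ℕ} (hk : k < n) (hi : i < n)
    (h : (k+1) % n = (i+1) % n) : k = i := by
  rcases Nat.lt_or_ge (k+1) n with h1 | h1 <;> rcases Nat.lt_or_ge (i+1) n with h2 | h2
  · rw [Nat.mod_eq_of_lt h1, Nat.mod_eq_of_lt h2] at h; omega
  · have h3 : i + 1 = n := by omega
    rw [Nat.mod_eq_of_lt h1, h3, Nat.mod_self] at h; omega
  · have h3 : k + 1 = n := by omega
    rw [h3, Nat.mod_self, Nat.mod_eq_of_lt h2] at h; omega
  · omega

lemma isUPath_reverse {l : List V} {a b : V} (h : IsUPath G l a b) :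
    IsUPath G l.reverse b a := by
  obtain ⟨hh, hl, hnd, hch⟩ := h
  refine ⟨?_, ?_, by simpa using hnd, ?_⟩
  · rwa [List.head?_reverse]
  · rwa [List.getLast?_reverse]
  · rw [List.Chain', List.isChain_reverse]
    exact hch.imp (fun a b hab => G.undir_symm _ _ hab)

lemma chord_aux (hCh : G.IsChordalUndir) {x y : V}
    (hnonadj : ¬ G.adj x y)
    (hpath : ∀ l : List V, IsUPath G l x y → ∃ z ∈ l, G.undir x z ∧ G.undir y z)
    (G' : MixedGraph V)
    (hundir : ∀ a b, G'.undir a b ↔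
      (G.undir a b ∨ (a = x ∧ b = y) ∨ (a = y ∧ b = x)))
    {v : V} {l : List V} (hcyc : G'.IsUCycle v l)
    {i : ℕ} (hi : i < l.length + 1)
    (hix : (v :: l)[i]'(by simp; omega) = x)
    (hiy : (v :: l)[(i+1) % (l.length+1)]'
      (by simp; exact Nat.le_of_lt_succ (Nat.mod_lt _ (by omega))) = y) :
    G'.HasChord v l := by
  obtain ⟨hlen4, hnd, hall⟩ := hcyc
  have hl3 : 3 ≤ l.length := by simpa using hlen4
  have hset : ∀ k, (hk : k < l.length + 1) → k ≠ i →
      G.undir ((v :: l)[k]'(by simp; omega))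
        ((v :: l)[(k+1) % (l.length + 1)]'
          (by simp; exact Nat.le_of_lt_succ (Nat.mod_lt _ (by omega)))) := by
    intro k hk hkne
    have hmem := hall _ (mem_cyclePairs.2 ⟨k, hk, rfl⟩)
    simp only at hmem
    rcases (hundir _ _).1 hmem with hu' | ⟨hkx, hky⟩ | ⟨hky, hkx⟩
    · exact hu'
    · exact absurd (hnd.getElem_inj_iff.1 (hix ▸ hkx)) hkne
    · exfalso
      have h1 : k = (i+1) % (l.length + 1) :=
        hnd.getElem_inj_iff.1 (hiy ▸ hky)
      have h2 : (k+1) % (l.length + 1) = i :=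
        hnd.getElem_inj_iff.1 (hix ▸ hkx)
      rw [h1, Nat.mod_add_mod] at h2
      rw [mod_two_cases (by omega) (by omega)] at h2
      omega
  have hchain := glued_chain' (v := v) (R := G.undir) hi hset
  have hhead := glued_head (v := v) (l := l) (i := i) hi
  have hlast := glued_last (v := v) (l := l) (i := i) hi
  rw [hiy] at hhead
  rw [hix] at hlast
  have hup : IsUPath G ((l ++ [v]).rotate i).reverse x y := by
    refine ⟨?_, ?_, by simpa using glued_nodup (i := i) hnd, ?_⟩
    · rwa [List.head?_reverse]
    · rwa [List.getLast?_reverse]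
    · rw [List.Chain', List.isChain_reverse]
      exact hchain.imp (fun a b hab => G.undir_symm _ _ hab)
  obtain ⟨z, hzmem, hxz, hyz⟩ := hpath _ hup
  have hzL : z ∈ v :: l := glued_mem (List.mem_reverse.1 hzmem)
  have hzx : z ≠ x := fun h => G.undir_irrefl x (h ▸ hxz)
  have hzy : z ≠ y := fun h => G.undir_irrefl y (h ▸ hyz)
  have hxL : x ∈ v :: l := hix ▸ List.getElem_mem _
  have hyL : y ∈ v :: l := hiy ▸ List.getElem_mem _
  -- (x, z) is never a cycle pair
  have hxz_not : (x, z) ∉ cyclePairs v l := by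
    intro hmem
    obtain ⟨k, hk, hkeq⟩ := mem_cyclePairs.1 hmem
    rw [Prod.mk.injEq] at hkeq
    have h1 : (v :: l)[k]'(by simp; omega) = x := hkeq.1.symm
    have h2 := hkeq.2.symm
    have : k = i := hnd.getElem_inj_iff.1 (hix ▸ h1)
    subst this
    exact hzy (by rw [← h2, hiy])
  -- (z, y) is never a cycle pair
  have hzy_not : (z, y) ∉ cyclePairs v l := by
    intro hmem
    obtain ⟨k, hk, hkeq⟩ := mem_cyclePairs.1 hmem
    rw [Prod.mk.injEq] at hkeq
    have h1 := hkeq.1.symm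
    have h2 : (v :: l)[(k+1) % (l.length+1)]'
        (by simp; exact Nat.le_of_lt_succ (Nat.mod_lt _ (by omega))) = y := hkeq.2.symm
    have h3 : (k+1) % (l.length+1) = (i+1) % (l.length+1) :=
      hnd.getElem_inj_iff.1 (hiy ▸ h2)
    have : k = i := mod_succ_inj (by omega) (by omega) h3
    subst this
    exact hzx (by rw [← h1, hix])
  by_cases hzp : z = (v :: l)[(i + l.length) % (l.length + 1)]'
      (by simp; exact Nat.le_of_lt_succ (Nat.mod_lt _ (by omega)))
  · -- z is the predecessor of x on the cycle; use the chord y − z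
    have hzs : z ≠ (v :: l)[((i+1) % (l.length+1) + 1) % (l.length + 1)]'
        (by simp; exact Nat.le_of_lt_succ (Nat.mod_lt _ (by omega))) := by
      intro hzs
      have h4 : (i + l.length) % (l.length + 1)
          = ((i+1) % (l.length+1) + 1) % (l.length + 1) :=
        hnd.getElem_inj_iff.1 (hzp ▸ hzs)
      rw [Nat.mod_add_mod] at h4
      have h5 : (i + 1 + 1) % (l.length + 1) = (i + 2) % (l.length + 1) := by
        have : i + 1 + 1 = i + 2 := by omega
        rw [this]
      rw [h5] at h4
      have h6 : l.length % (l.length + 1) = 2 % (l.length + 1) :=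
        Nat.ModEq.add_left_cancel' i h4
      rw [Nat.mod_eq_of_lt (by omega), Nat.mod_eq_of_lt (by omega)] at h6
      omega
    refine ⟨y, z, hyL, hzL, (hundir _ _).2 (Or.inl hyz), ?_, hzy_not⟩
    intro hmem
    obtain ⟨k, hk, hkeq⟩ := mem_cyclePairs.1 hmem
    rw [Prod.mk.injEq] at hkeq
    have h1 : (v :: l)[k]'(by simp; omega) = y := hkeq.1.symm
    have h2 := hkeq.2.symm
    have h3 : k = (i+1) % (l.length+1) := hnd.getElem_inj_iff.1 (hiy ▸ h1)
    subst h3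
    exact hzs (by rw [← h2])
  · -- use the chord x − z
    refine ⟨x, z, hxL, hzL, (hundir _ _).2 (Or.inl hxz), hxz_not, ?_⟩
    intro hmem
    obtain ⟨k, hk, hkeq⟩ := mem_cyclePairs.1 hmem
    rw [Prod.mk.injEq] at hkeq
    have h1 := hkeq.1.symm
    have h2 : (v :: l)[(k+1) % (l.length+1)]'
        (by simp; exact Nat.le_of_lt_succ (Nat.mod_lt _ (by omega))) = x := hkeq.2.symm
    have h3 : (k+1) % (l.length+1) = i := hnd.getElem_inj_iff.1 (hix ▸ h2)
    have h4 : ((i + l.length) + 1) % (l.length + 1) = i := by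
      have h5 : i + l.length + 1 = i + (l.length + 1) := by omega
      rw [h5, Nat.add_mod_right, Nat.mod_eq_of_lt (by omega)]
    have h6 : k = (i + l.length) % (l.length + 1) := by
      apply mod_succ_inj (n := l.length + 1) (by omega)
        (Nat.mod_lt _ (by omega))
      rw [Nat.mod_add_mod, h4, h3]
    subst h6
    exact hzp h1.symm

end MGAux

/-- Inserting an undirected edge `x − y` between nonadjacent vertices of a
completed PDAG with equal parent sets, such that every undirected path from
`x` to `y` contains a common neighbour of `x` and `y`, yields a graph that is
a chain graph, has chordal chain components, and contains no induced flag
`w → u − v` with `w, v` nonadjacent. -/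
theorem stmt12 {V : Type*} (G : MixedGraph V) (hG : G.IsCompletedPDAG)
    (x y : V) (hne : x ≠ y) (hnonadj : ¬ G.adj x y)
    (hpar : G.parents x = G.parents y)
    (hpath : ∀ l : List V, IsUPath G l x y →
      ∃ z ∈ l, G.undir x z ∧ G.undir y z)
    (G' : MixedGraph V)
    (hdir : ∀ a b, G'.dir a b ↔ G.dir a b)
    (hundir : ∀ a b, G'.undir a b ↔
      (G.undir a b ∨ (a = x ∧ b = y) ∨ (a = y ∧ b = x))) :
    G'.IsChainGraph ∧ G'.IsChordalUndir ∧ G'.NoFlag := by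
  open MGAux in
  obtain ⟨hC, hCh, hF, _⟩ := hG
  have hnonadj' : ¬ G.adj y x := fun h => hnonadj (MGAux.adj_symm h)
  have hpar' : ∀ w, G.dir w x ↔ G.dir w y := fun w => Set.ext_iff.1 hpar w
  have hundir' : ∀ a b, G'.undir a b ↔
      (G.undir a b ∨ (a = y ∧ b = x) ∨ (a = x ∧ b = y)) := by
    intro a b; rw [hundir]; tauto
  have hpath' : ∀ l : List V, IsUPath G l y x →
      ∃ z ∈ l, G.undir y z ∧ G.undir x z := by
    intro l hl
    obtain ⟨z, hz, h1, h2⟩ := hpath l.reverse (MGAux.isUPath_reverse hl)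
    exact ⟨z, List.mem_reverse.1 hz, h2, h1⟩
  refine ⟨?_, ?_, ?_⟩
  · -- chain graph
    intro v l hcyc
    by_cases hnew : ∃ k, ∃ hk : k < l.length + 1,
        (((v :: l)[k]'(by simp; omega) = x ∧
          (v :: l)[(k+1) % (l.length+1)]'
            (by simp; exact Nat.le_of_lt_succ (Nat.mod_lt _ (by omega))) = y) ∨
         ((v :: l)[k]'(by simp; omega) = y ∧
          (v :: l)[(k+1) % (l.length+1)]'
            (by simp; exact Nat.le_of_lt_succ (Nat.mod_lt _ (by omega))) = x))
    · obtain ⟨k, hk, hcase⟩ := hnew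
      rcases hcase with ⟨h1, h2⟩ | ⟨h1, h2⟩
      · exact MGAux.noPDCycle_aux hC hF hnonadj hpar' G' hdir hundir hcyc hk h1 h2
      · exact MGAux.noPDCycle_aux hC hF hnonadj' (fun w => (hpar' w).symm) G' hdir
          hundir' hcyc hk h1 h2
    · obtain ⟨hl0, hnd, hall, pr, hpr, hprdir⟩ := hcyc
      refine hC v l ⟨hl0, hnd, ?_, pr, hpr, (hdir _ _).1 hprdir⟩
      intro p hp
      obtain ⟨k, hk, hkeq⟩ := MGAux.mem_cyclePairs.1 hp
      have hedge := hall p hp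
      rw [hkeq] at hedge ⊢
      simp only at hedge ⊢
      rcases hedge with hd | hu
      · exact Or.inl ((hdir _ _).1 hd)
      · rcases (hundir _ _).1 hu with hu' | ⟨h1, h2⟩ | ⟨h1, h2⟩
        · exact Or.inr hu'
        · exact absurd ⟨k, hk, Or.inl ⟨h1, h2⟩⟩ hnew
        · exact absurd ⟨k, hk, Or.inr ⟨h1, h2⟩⟩ hnew
  · -- chordal
    intro v l hcyc
    by_cases hnew : ∃ k, ∃ hk : k < l.length + 1,
        (((v :: l)[k]'(by simp; omega) = x ∧
          (v :: l)[(k+1) % (l.length+1)]'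
            (by simp; exact Nat.le_of_lt_succ (Nat.mod_lt _ (by omega))) = y) ∨
         ((v :: l)[k]'(by simp; omega) = y ∧
          (v :: l)[(k+1) % (l.length+1)]'
            (by simp; exact Nat.le_of_lt_succ (Nat.mod_lt _ (by omega))) = x))
    · obtain ⟨k, hk, hcase⟩ := hnew
      rcases hcase with ⟨h1, h2⟩ | ⟨h1, h2⟩
      · exact MGAux.chord_aux hCh hnonadj hpath G' hundir hcyc hk h1 h2
      · exact MGAux.chord_aux hCh hnonadj' hpath' G' hundir' hcyc hk h1 h2
    · obtain ⟨hlen4, hnd, hall⟩ := hcyc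
      have hGcyc : G.IsUCycle v l := by
        refine ⟨hlen4, hnd, ?_⟩
        intro p hp
        obtain ⟨k, hk, hkeq⟩ := MGAux.mem_cyclePairs.1 hp
        have hu := hall p hp
        rw [hkeq] at hu ⊢
        simp only at hu ⊢
        rcases (hundir _ _).1 hu with hu' | ⟨h1, h2⟩ | ⟨h1, h2⟩
        · exact hu'
        · exact absurd ⟨k, hk, Or.inl ⟨h1, h2⟩⟩ hnew
        · exact absurd ⟨k, hk, Or.inr ⟨h1, h2⟩⟩ hnew
      obtain ⟨a, b, haL, hbL, hab, hnp1, hnp2⟩ := hCh v l hGcyc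
      exact ⟨a, b, haL, hbL, (hundir _ _).2 (Or.inl hab), hnp1, hnp2⟩
  · -- no flag
    intro w u z hd hu
    have hd' : G.dir w u := (hdir _ _).1 hd
    rcases (hundir _ _).1 hu with hu' | ⟨rfl, rfl⟩ | ⟨rfl, rfl⟩
    · rcases hF w u z hd' hu' with h | h | h
      · exact Or.inl ((hdir _ _).2 h)
      · exact Or.inr (Or.inl ((hdir _ _).2 h))
      · exact Or.inr (Or.inr ((hundir _ _).2 (Or.inl h)))
    · exact Or.inl ((hdir _ _).2 ((hpar' w).1 hd'))
    · exact Or.inl ((hdir _ _).2 ((hpar' w).2 hd'))
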